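/- Let C be a category and F : C ⥤ Cat a functor to the category of small categories such that for every object c of C the category F.obj c has an initial object. Then the projection Grothendieck.forget F : Grothendieck F ⥤ C from the Grothendieck construction of F to C is a final functor; consequently, for every functor G : C ⥤ D whose colimit exists, the canonical morphism colim ((Grothendieck.forget F) ⋙ G) ⟶ colim G is an isomorphism. -/

import Mathlib

open CategoryTheory CategoryTheory.Limits

universe v₁ u₁ v₂ u₂ v₃ u₃

/-- §8.3: if `F : C ⥤ Cat` is such that every fiber category `F.obj c`
has an initial object, then the projection `Grothendieck.forget F : Grothendieck F ⥤ C`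
from the Grothendieck construction is a final functor; consequently, for every functor
`G : C ⥤ D` whose colimit exists (together with the colimit of the restricted diagram),
the canonical morphism `colim ((Grothendieck.forget F) ⋙ G) ⟶ colim G` is an isomorphism. -/
theorem grothendieck_forget_final_of_initial
    {C : Type u₁} [Category.{v₁} C] (F : C ⥤ Cat.{v₂, u₂})
    (h : ∀ c : C, HasInitial (F.obj c)) :
    (Grothendieck.forget F).Final ∧
      ∀ {D : Type u₃} [Category.{v₃} D] (G : C ⥤ D)
        [HasColimit G] [HasColimit (Grothendieck.forget F ⋙ G)],
        IsIso (colimit.pre G (Grothendieck.forget F)) := by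
  haveI : ∀ c : C, HasInitial (F.obj c) := h
  haveI : (Grothendieck.forget F).Final := by
    constructor
    intro c
    let XB : Grothendieck F := ⟨c, ⊥_ (F.obj c)⟩
    let B : StructuredArrow c (Grothendieck.forget F) :=
      StructuredArrow.mk (Y := XB) (𝟙 c)
    have key : ∀ Z : StructuredArrow c (Grothendieck.forget F), Zigzag B Z := by
      intro Z
      obtain ⟨⟨⟨⟩⟩, ⟨d, x⟩, f⟩ := Z
      dsimp at f
      let X1 : Grothendieck F := ⟨d, x⟩
      let X2 : Grothendieck F := ⟨d, (F.map f).toFunctor.obj (⊥_ (F.obj c))⟩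
      let X3 : Grothendieck F := ⟨d, ⊥_ (F.obj d)⟩
      have e : ∀ y : F.obj d, (F.map (𝟙 d)).toFunctor.obj y = y := by
        intro y; rw [CategoryTheory.Functor.map_id]; rfl
      let g1 : XB ⟶ X2 := ⟨f, 𝟙 _⟩
      let g2 : X3 ⟶ X2 := ⟨𝟙 d, eqToHom (e _) ≫ initial.to _⟩
      let g3 : X3 ⟶ X1 := ⟨𝟙 d, eqToHom (e _) ≫ initial.to _⟩
      let P2 : StructuredArrow c (Grothendieck.forget F) :=
        StructuredArrow.mk (Y := X2) f
      let P3 : StructuredArrow c (Grothendieck.forget F) :=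
        StructuredArrow.mk (Y := X3) f
      have h1 : B ⟶ P2 := StructuredArrow.homMk g1 (by simp [XB, X2, g1, B, P2]; exact Category.id_comp _)
      have h2 : P3 ⟶ P2 := StructuredArrow.homMk g2 (by simp [X3, X2, g2, P2, P3]; exact Category.comp_id _)
      have h3 : P3 ⟶ (StructuredArrow.mk (Y := X1) f) :=
        StructuredArrow.homMk g3 (by simp [X3, X1, g3, P3]; exact Category.comp_id _)
      exact (Zigzag.of_hom h1).trans ((Zigzag.of_inv h2).trans (Zigzag.of_hom h3))
    haveI : Nonempty (StructuredArrow c (Grothendieck.forget F)) := ⟨B⟩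
    exact zigzag_isConnected fun j₁ j₂ => (key j₁).symm.trans (key j₂)
  exact ⟨inferInstance, fun G _ _ => inferInstance⟩
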